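/- If μ and ν are in 𝔸_U, then μˆν is in 𝔸_U. -/

import Mathlib

open scoped Classical

/-- The free binary system (free magma) on one generator. -/
abbrev 𝕋 : Type := FreeMagma Unit

/-- The generator `1` of `𝕋`. -/
def e1 : 𝕋 := FreeMagma.of ()

/-- `#(t)`: the number of occurrences of the generator in `t`. -/
def cnt : 𝕋 → ℕ
  | FreeMagma.of _ => 1
  | FreeMagma.mul a b => cnt a + cnt b

/-- The space `ℓ^∞(S)` of bounded real-valued functions on `S`. -/
def Bdd (S : Type*) : Type _ := {f : S → ℝ // ∃ M, ∀ s, |f s| ≤ M}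

/-- Package a function as an element of `Bdd S` (junk value if unbounded). -/
noncomputable def liftBdd {S : Type*} (g : S → ℝ) : Bdd S :=
  if h : ∃ M, ∀ s, |g s| ≤ M then ⟨g, h⟩ else ⟨fun _ => 0, 0, fun _ => by simp⟩

/-- The constant function as an element of `Bdd S`. -/
def constB (S : Type*) (c : ℝ) : Bdd S := ⟨fun _ => c, |c|, fun _ => le_rfl⟩

/-- The characteristic function of `E` as an element of `Bdd S`. -/
noncomputable def indB {S : Type*} (E : Set S) : Bdd S :=
  liftBdd (fun s => if s ∈ E then 1 else 0)

/-- `Pr S`: finitely additive probability measures on `S`, identified with the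
positive normalized linear functionals on `ℓ^∞(S)`.  The weak* topology is the
subspace topology inherited from the product topology on `Bdd S → ℝ`. -/
def PrSet (S : Type*) : Set (Bdd S → ℝ) :=
  {φ | (∀ f g h : Bdd S, (∀ s, h.1 s = f.1 s + g.1 s) → φ h = φ f + φ g) ∧
       (∀ (c : ℝ) (f g : Bdd S), (∀ s, g.1 s = c * f.1 s) → φ g = c * φ f) ∧
       (∀ f : Bdd S, (∀ s, 0 ≤ f.1 s) → 0 ≤ φ f) ∧
       φ (constB S 1) = 1}

/-- `μ(E)`: the measure of a set `E ⊆ S`. -/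
noncomputable def mE {S : Type*} (φ : Bdd S → ℝ) (E : Set S) : ℝ := φ (indB E)

/-- The product `μ ⊗ ν` of finitely additive measures:
`μ⊗ν(f) = μ(x ↦ ν(y ↦ f(x,y)))`. -/
noncomputable def prodM {S T : Type*} (φ : Bdd S → ℝ) (ψ : Bdd T → ℝ) :
    Bdd (S × T) → ℝ :=
  fun f => φ (liftBdd fun x => ψ (liftBdd fun y => f.1 (x, y)))

/-- The extension of a binary operation `op` on `S` to `Pr S`:
`μ⋆ν(f) = μ(x ↦ ν(y ↦ f(x ⋆ y)))`. -/
noncomputable def starM {S : Type*} (op : S → S → S) (φ ψ : Bdd S → ℝ) :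
    Bdd S → ℝ :=
  fun f => φ (liftBdd fun x => ψ (liftBdd fun y => f.1 (op x y)))

/-- The extension of `ˆ` to `Pr 𝕋`. -/
noncomputable def hmul (φ ψ : Bdd 𝕋 → ℝ) : Bdd 𝕋 → ℝ := starM (· * ·) φ ψ

/-- Finitely supported probability measures: finite convex combinations of
point evaluations. -/
def FinSuppPr (S : Type*) : Set (Bdd S → ℝ) :=
  {φ | ∃ (F : Finset S) (w : S → ℝ), (∀ s ∈ F, 0 ≤ w s) ∧ (∑ s ∈ F, w s) = 1 ∧
      ∀ f : Bdd S, φ f = ∑ s ∈ F, w s * f.1 s}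

/-- `𝔸_n`: finitely supported probability measures concentrated on `𝕋_n`. -/
def Asets (n : ℕ) : Set (Bdd 𝕋 → ℝ) :=
  {φ | ∃ (F : Finset 𝕋) (w : 𝕋 → ℝ), (∀ t ∈ F, cnt t = n) ∧ (∀ t ∈ F, 0 ≤ w t) ∧
      (∑ t ∈ F, w t) = 1 ∧ ∀ f : Bdd 𝕋, φ f = ∑ t ∈ F, w t * f.1 t}

/-- The extension of `+` on `ℕ` to ultrafilters: `A ∈ U+V` iff
`{m : {n : m+n ∈ A} ∈ V} ∈ U`. -/
noncomputable def addU (U V : Ultrafilter ℕ) : Ultrafilter ℕ :=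
  U.bind fun m => V.map fun n => m + n

/-- `𝔸_U`: the `U`-limit of the sets `𝔸_m`. -/
def AU (U : Ultrafilter ℕ) : Set (Bdd 𝕋 → ℝ) :=
  {μ | μ ∈ PrSet 𝕋 ∧ ∀ W : Set (Bdd 𝕋 → ℝ), IsOpen W → μ ∈ W →
      {m : ℕ | (W ∩ Asets m).Nonempty} ∈ U}

/-- The extension of `ˆ` to ultrafilters on `𝕋`: `E ∈ UˆV` iff
`{u : {v : uˆv ∈ E} ∈ V} ∈ U`. -/
noncomputable def umul (U V : Ultrafilter 𝕋) : Ultrafilter 𝕋 :=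
  U.bind fun u => V.map fun v => u * v

/-- Substitution of measures into a term `t`:
`t(μ_0,…,μ_{m-1})(f)` is the nested integral
`μ_0(x_0 ↦ ⋯ μ_{m-1}(x_{m-1} ↦ f(t(x⃗)))⋯)`. -/
noncomputable def substM : 𝕋 → List (Bdd 𝕋 → ℝ) → (Bdd 𝕋 → ℝ)
  | FreeMagma.of _, μs => μs.headI
  | FreeMagma.mul a b, μs =>
      hmul (substM a (μs.take (cnt a))) (substM b (μs.drop (cnt a)))

/-- `t_k`: iteratively remove the carets of `t` involving only leaves of index
greater than `k`. -/
def tk : 𝕋 → ℕ → 𝕋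
  | FreeMagma.of _, _ => e1
  | FreeMagma.mul a b, k => if k < cnt a then tk a k * e1 else a * tk b (k - cnt a)

/-- `l_k(t) = #(t_k) - 2` (truncated subtraction). -/
def lk (t : 𝕋) (k : ℕ) : ℕ := cnt (tk t k) - 2

/-- The subterm `t/σ` of `t` at address `σ` (`false` = left/`0`, `true` = right/`1`). -/
def subT : 𝕋 → List Bool → Option 𝕋
  | t, [] => some t
  | FreeMagma.of _, _ :: _ => none
  | FreeMagma.mul a b, c :: σ => if c then subT b σ else subT a σ

/-- `σ <_lex ς` for incompatible binary sequences: at the first coordinate where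
they differ, `σ` has `0` and `ς` has `1`. -/
def lexLT (σ ς : List Bool) : Prop :=
  ∃ p σ' ς', σ = p ++ (false :: σ') ∧ ς = p ++ (true :: ς')

/-- `x₀·E`. -/
def x0E (E : Set 𝕋) : Set 𝕋 :=
  {x | ∃ a b c : 𝕋, x = a * (b * c) ∧ (a * b) * c ∈ E}

/-- `x₁·E`. -/
def x1E (E : Set 𝕋) : Set 𝕋 :=
  {x | ∃ s a b c : 𝕋, x = s * (a * (b * c)) ∧ s * ((a * b) * c) ∈ E}

/-- `u_σ` for a nonempty finite binary sequence `σ`. -/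
def uSeq : List Bool → 𝕋
  | [] => e1
  | [_] => e1
  | b :: σ => if b then e1 * uSeq σ else uSeq σ * e1

/-- `a ≪ b`: for some `p`, `#(a) < 2^p` and `2^p` divides `#(b)`. -/
def ll (a b : 𝕋) : Prop := ∃ p : ℕ, cnt a < 2 ^ p ∧ 2 ^ p ∣ cnt b

/-- `r↾n`: the first `n` values of `r` as a finite binary sequence. -/
def rList (r : ℕ → Bool) (n : ℕ) : List Bool := (List.range n).map r

/-- The map `h_r : 𝕋 → 𝕋`. -/
noncomputable def hr (r : ℕ → Bool) : 𝕋 → 𝕋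
  | FreeMagma.of _ => uSeq (rList r 1)
  | FreeMagma.mul a b =>
      if ll a b then hr r a * hr r b else uSeq (rList r (cnt a + cnt b))

/-- The action of `h_r` on measures: `h_r(μ)(f) = μ(f ∘ h_r)`. -/
noncomputable def hrM (r : ℕ → Bool) (φ : Bdd 𝕋 → ℝ) : Bdd 𝕋 → ℝ :=
  fun f => φ (liftBdd fun t => f.1 (hr r t))

/-- `lev`: `l(1) = 0`, `l(aˆb) = l(a) + 1`. -/
def lev : 𝕋 → ℕ
  | FreeMagma.of _ => 0
  | FreeMagma.mul a _ => lev a + 1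

/-- `C` is closed under `ˆ`. -/
def HClosed (C : Set (Bdd 𝕋 → ℝ)) : Prop := ∀ μ ∈ C, ∀ ν ∈ C, hmul μ ν ∈ C
/-! ### Auxiliary lemmas for Statement 3 -/

instance : Nonempty 𝕋 := ⟨e1⟩

/-- The uniform-bound property of a functional. -/
def Bnd {S : Type*} (φ : Bdd S → ℝ) : Prop :=
  ∀ (f : Bdd S) (M : ℝ), (∀ s, |f.1 s| ≤ M) → |φ f| ≤ M

theorem liftBdd_val {S : Type*} {g : S → ℝ} (h : ∃ M, ∀ s, |g s| ≤ M) :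
    (liftBdd g).1 = g := by rw [liftBdd]; exact congrArg Subtype.val (dif_pos h)

theorem PrSet.const {S : Type*} {φ : Bdd S → ℝ} (hφ : φ ∈ PrSet S) (c : ℝ) :
    φ (constB S c) = c := by
  have h := hφ.2.1 c (constB S 1) (constB S c) (fun s => by simp [constB])
  rw [h, hφ.2.2.2, mul_one]

theorem PrSet.congr' {S : Type*} {φ : Bdd S → ℝ} (hφ : φ ∈ PrSet S) {f g : Bdd S}
    (h : ∀ s, g.1 s = f.1 s) : φ g = φ f := by
  have h2 := hφ.2.1 1 f g (fun s => by rw [h s, one_mul])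
  rw [h2, one_mul]

theorem PrSet.bnd {S : Type*} [Nonempty S] {φ : Bdd S → ℝ} (hφ : φ ∈ PrSet S) :
    Bnd φ := by
  intro f M hM
  obtain ⟨s0⟩ := ‹Nonempty S›
  have hM0 : 0 ≤ M := le_trans (abs_nonneg _) (hM s0)
  have hb1 : ∃ K, ∀ s, |M - f.1 s| ≤ K := by
    refine ⟨M + M, fun s => ?_⟩
    have h := abs_le.mp (hM s)
    exact abs_le.mpr ⟨by linarith [h.1, h.2], by linarith [h.1, h.2]⟩
  have hb2 : ∃ K, ∀ s, |f.1 s + M| ≤ K := by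
    refine ⟨M + M, fun s => ?_⟩
    have h := abs_le.mp (hM s)
    exact abs_le.mpr ⟨by linarith [h.1, h.2], by linarith [h.1, h.2]⟩
  have h1v : (liftBdd fun s => M - f.1 s).1 = fun s => M - f.1 s := liftBdd_val hb1
  have h2v : (liftBdd fun s => f.1 s + M).1 = fun s => f.1 s + M := liftBdd_val hb2
  have hadd1 : φ (constB S M) = φ f + φ (liftBdd fun s => M - f.1 s) := by
    refine hφ.1 f _ (constB S M) (fun s => ?_)
    rw [h1v]
    show M = f.1 s + (M - f.1 s)
    ring
  have hpos1 : 0 ≤ φ (liftBdd fun s => M - f.1 s) := by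
    refine hφ.2.2.1 _ (fun s => ?_)
    rw [h1v]
    exact sub_nonneg.mpr ((abs_le.mp (hM s)).2)
  have hadd2 : φ (liftBdd fun s => f.1 s + M) = φ f + φ (constB S M) := by
    refine hφ.1 f (constB S M) _ (fun s => ?_)
    rw [h2v]
    rfl
  have hpos2 : 0 ≤ φ (liftBdd fun s => f.1 s + M) := by
    refine hφ.2.2.1 _ (fun s => ?_)
    rw [h2v]
    have h := (abs_le.mp (hM s)).1
    show 0 ≤ f.1 s + M
    linarith
  have hc : φ (constB S M) = M := PrSet.const hφ M
  rw [hc] at hadd1 hadd2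
  exact abs_le.mpr ⟨by linarith, by linarith⟩

theorem Asets.bnd {n : ℕ} {φ : Bdd 𝕋 → ℝ} (hφ : φ ∈ Asets n) : Bnd φ := by
  obtain ⟨F, w, -, hw0, hw1, hev⟩ := hφ
  intro f M hM
  rw [hev]
  calc |∑ t ∈ F, w t * f.1 t| ≤ ∑ t ∈ F, |w t * f.1 t| :=
        Finset.abs_sum_le_sum_abs _ _
    _ ≤ ∑ t ∈ F, w t * M := Finset.sum_le_sum (fun t ht => by
        rw [abs_mul, abs_of_nonneg (hw0 t ht)]
        exact mul_le_mul_of_nonneg_left (hM t) (hw0 t ht))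
    _ = M := by rw [← Finset.sum_mul, hw1, one_mul]

theorem inner_bdd {ψ : Bdd 𝕋 → ℝ} (hψ : Bnd ψ) (f : Bdd 𝕋) {M : ℝ}
    (hM : ∀ s, |f.1 s| ≤ M) (x : 𝕋) :
    |ψ (liftBdd fun y => f.1 (x * y))| ≤ M := by
  apply hψ
  intro y
  rw [liftBdd_val ⟨M, fun y => hM _⟩]
  exact hM _

/-- The "integrated" function appearing in `hmul`. -/
noncomputable def gFdef (ν : Bdd 𝕋 → ℝ) (f : Bdd 𝕋) : Bdd 𝕋 :=
  liftBdd fun x => ν (liftBdd fun y => f.1 (x * y))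

theorem hmul_eq_gFdef (μ ν : Bdd 𝕋 → ℝ) (f : Bdd 𝕋) :
    hmul μ ν f = μ (gFdef ν f) := rfl

theorem gFdef_val {ν : Bdd 𝕋 → ℝ} (hν : Bnd ν) (f : Bdd 𝕋) :
    (gFdef ν f).1 = fun x => ν (liftBdd fun y => f.1 (x * y)) := by
  obtain ⟨M, hM⟩ := f.2
  exact liftBdd_val ⟨M, fun x => inner_bdd hν f hM x⟩

theorem hmul_eval_fin {F : Finset 𝕋} {w : 𝕋 → ℝ} {φ ψ : Bdd 𝕋 → ℝ}
    (hφ : ∀ f : Bdd 𝕋, φ f = ∑ t ∈ F, w t * f.1 t) (hψ : Bnd ψ) (f : Bdd 𝕋) :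
    hmul φ ψ f = ∑ x ∈ F, w x * ψ (liftBdd fun y => f.1 (x * y)) := by
  rw [hmul_eq_gFdef, hφ (gFdef ψ f), gFdef_val hψ]

theorem hmul_mem_PrSet {μ ν : Bdd 𝕋 → ℝ} (hμ : μ ∈ PrSet 𝕋) (hν : ν ∈ PrSet 𝕋) :
    hmul μ ν ∈ PrSet 𝕋 := by
  have hνb : Bnd ν := PrSet.bnd hν
  have inner_val : ∀ (f : Bdd 𝕋) (x : 𝕋),
      (liftBdd fun y => f.1 (x * y)).1 = fun y => f.1 (x * y) := by
    intro f x
    obtain ⟨M, hM⟩ := f.2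
    exact liftBdd_val ⟨M, fun y => hM _⟩
  refine ⟨?_, ?_, ?_, ?_⟩
  · intro f g h hfgh
    rw [hmul_eq_gFdef, hmul_eq_gFdef, hmul_eq_gFdef]
    refine hμ.1 (gFdef ν f) (gFdef ν g) (gFdef ν h) (fun x => ?_)
    rw [gFdef_val hνb, gFdef_val hνb, gFdef_val hνb]
    refine hν.1 _ _ _ (fun y => ?_)
    rw [inner_val f x, inner_val g x, inner_val h x]
    exact hfgh (x * y)
  · intro c f g hfg
    rw [hmul_eq_gFdef, hmul_eq_gFdef]
    refine hμ.2.1 c (gFdef ν f) (gFdef ν g) (fun x => ?_)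
    rw [gFdef_val hνb, gFdef_val hνb]
    refine hν.2.1 c _ _ (fun y => ?_)
    rw [inner_val f x, inner_val g x]
    exact hfg (x * y)
  · intro f hf
    rw [hmul_eq_gFdef]
    refine hμ.2.2.1 (gFdef ν f) (fun x => ?_)
    rw [gFdef_val hνb]
    refine hν.2.2.1 _ (fun y => ?_)
    rw [inner_val f x]
    exact hf (x * y)
  · rw [hmul_eq_gFdef]
    have h1 : ∀ x : 𝕋, ν (liftBdd fun y => (constB 𝕋 1).1 (x * y)) = 1 := by
      intro x
      have : ν (liftBdd fun y => (constB 𝕋 1).1 (x * y)) = ν (constB 𝕋 1) := by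
        refine PrSet.congr' hν (fun y => ?_)
        rw [inner_val (constB 𝕋 1) x]
        rfl
      rw [this, hν.2.2.2]
    have h2 : μ (gFdef ν (constB 𝕋 1)) = μ (constB 𝕋 1) := by
      refine PrSet.congr' hμ (fun x => ?_)
      rw [gFdef_val hνb]
      show ν (liftBdd fun y => (constB 𝕋 1).1 (x * y)) = 1
      exact h1 x
    rw [h2, hμ.2.2.2]

theorem tmul_inj {a b c d : 𝕋} (h : a * b = c * d) : a = c ∧ b = d := by
  injection h with h1 h2
  exact ⟨h1, h2⟩

theorem hmul_mem_Asets {m n : ℕ} {φ ψ : Bdd 𝕋 → ℝ} (hφ : φ ∈ Asets m)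
    (hψ : ψ ∈ Asets n) : hmul φ ψ ∈ Asets (m + n) := by
  have hψb : Bnd ψ := Asets.bnd hψ
  obtain ⟨F1, w1, hc1, h01, hs1, he1⟩ := hφ
  obtain ⟨F2, w2, hc2, h02, hs2, he2⟩ := hψ
  classical
  set w' : 𝕋 → ℝ := fun t => match t with
    | FreeMagma.mul a b => w1 a * w2 b
    | FreeMagma.of _ => 0 with hw'
  have hw'mul : ∀ a b : 𝕋, w' (a * b) = w1 a * w2 b := fun a b => rfl
  have hinj : ∀ p ∈ F1 ×ˢ F2, ∀ q ∈ F1 ×ˢ F2,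
      p.1 * p.2 = q.1 * q.2 → p = q := by
    intro p _ q _ h
    obtain ⟨h1, h2⟩ := tmul_inj h
    exact Prod.ext h1 h2
  refine ⟨(F1 ×ˢ F2).image (fun p => p.1 * p.2), w', ?_, ?_, ?_, ?_⟩
  · intro t ht
    obtain ⟨p, hp, rfl⟩ := Finset.mem_image.mp ht
    obtain ⟨hp1, hp2⟩ := Finset.mem_product.mp hp
    show cnt p.1 + cnt p.2 = m + n
    rw [hc1 p.1 hp1, hc2 p.2 hp2]
  · intro t ht
    obtain ⟨p, hp, rfl⟩ := Finset.mem_image.mp ht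
    obtain ⟨hp1, hp2⟩ := Finset.mem_product.mp hp
    rw [hw'mul]
    exact mul_nonneg (h01 p.1 hp1) (h02 p.2 hp2)
  · rw [Finset.sum_image hinj, Finset.sum_product]
    have : ∀ x ∈ F1, ∀ y ∈ F2, w' (x * y) = w1 x * w2 y := fun x _ y _ => rfl
    calc (∑ x ∈ F1, ∑ y ∈ F2, w' (x * y))
        = ∑ x ∈ F1, ∑ y ∈ F2, w1 x * w2 y :=
          Finset.sum_congr rfl fun x hx =>
            Finset.sum_congr rfl fun y hy => this x hx y hy
      _ = (∑ x ∈ F1, w1 x) * (∑ y ∈ F2, w2 y) := (Finset.sum_mul_sum _ _ _ _).symm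
      _ = 1 := by rw [hs1, hs2, one_mul]
  · intro f
    obtain ⟨M, hM⟩ := f.2
    rw [hmul_eval_fin he1 hψb f, Finset.sum_image hinj, Finset.sum_product]
    refine Finset.sum_congr rfl fun x _ => ?_
    rw [he2, Finset.mul_sum]
    refine Finset.sum_congr rfl fun y _ => ?_
    rw [liftBdd_val ⟨M, fun y => hM _⟩, hw'mul]
    ring

/-- `𝔸_U` is closed under `ˆ`. -/
theorem AU_closed_under_hmul (U : Ultrafilter ℕ) (hU : addU U U = U)
    (μ ν : Bdd 𝕋 → ℝ) (hμ : μ ∈ AU U) (hν : ν ∈ AU U) :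
    hmul μ ν ∈ AU U := by
  obtain ⟨hμP, hμA⟩ := hμ
  obtain ⟨hνP, hνA⟩ := hν
  have hνb : Bnd ν := PrSet.bnd hνP
  refine ⟨hmul_mem_PrSet hμP hνP, ?_⟩
  intro W hW hmem
  obtain ⟨I, u, hu, hsub⟩ := isOpen_pi_iff.mp hW _ hmem
  -- first-stage open neighborhood of μ
  have hW'open : IsOpen (⋂ f ∈ I, (fun χ : Bdd 𝕋 → ℝ => χ (gFdef ν f)) ⁻¹' (u f)) :=
    isOpen_biInter_finset fun f hf =>
      (hu f hf).1.preimage (continuous_apply (gFdef ν f))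
  have hμW' : μ ∈ ⋂ f ∈ I, (fun χ : Bdd 𝕋 → ℝ => χ (gFdef ν f)) ⁻¹' (u f) := by
    refine Set.mem_iInter₂.mpr fun f hf => ?_
    show μ (gFdef ν f) ∈ u f
    have h2 := (hu f hf).2
    rwa [hmul_eq_gFdef] at h2
  have hS : {m | ((⋂ f ∈ I, (fun χ : Bdd 𝕋 → ℝ => χ (gFdef ν f)) ⁻¹' (u f)) ∩ Asets m).Nonempty} ∈ U :=
    hμA _ hW'open hμW'
  have hkey : {k | (W ∩ Asets k).Nonempty} ∈ addU U U := by
    have hiff : {k | (W ∩ Asets k).Nonempty} ∈ addU U U ↔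
        {m | {n | m + n ∈ {k | (W ∩ Asets k).Nonempty}} ∈ U} ∈ U := by
      have h0 : {k | (W ∩ Asets k).Nonempty} ∈ addU U U ↔
          {k | (W ∩ Asets k).Nonempty} ∈
            Filter.bind ↑U (fun m => ↑(U.map fun n => m + n)) := Iff.rfl
      rw [h0, Filter.mem_bind']
      rfl
    rw [hiff]
    refine Filter.mem_of_superset hS ?_
    intro m hm
    obtain ⟨μ', hμ'W', hμ'A⟩ := hm
    obtain ⟨F, w, hcF, h0F, hsF, heF⟩ := id hμ'A
    -- second-stage open neighborhood of ν
    have hW''open : IsOpen (⋂ f ∈ I,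
        (fun χ : Bdd 𝕋 → ℝ => ∑ x ∈ F, w x * χ (liftBdd fun y => f.1 (x * y))) ⁻¹' (u f)) :=
      isOpen_biInter_finset fun f hf => by
        refine (hu f hf).1.preimage ?_
        exact continuous_finset_sum F fun x _ =>
          continuous_const.mul (continuous_apply _)
    have hνW'' : ν ∈ ⋂ f ∈ I,
        (fun χ : Bdd 𝕋 → ℝ => ∑ x ∈ F, w x * χ (liftBdd fun y => f.1 (x * y))) ⁻¹' (u f) := by
      refine Set.mem_iInter₂.mpr fun f hf => ?_
      show (∑ x ∈ F, w x * ν (liftBdd fun y => f.1 (x * y))) ∈ u f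
      have heq : ∑ x ∈ F, w x * ν (liftBdd fun y => f.1 (x * y)) = μ' (gFdef ν f) := by
        rw [heF (gFdef ν f), gFdef_val hνb]
      rw [heq]
      exact Set.mem_iInter₂.mp hμ'W' f hf
    have hT : {n | ((⋂ f ∈ I,
        (fun χ : Bdd 𝕋 → ℝ => ∑ x ∈ F, w x * χ (liftBdd fun y => f.1 (x * y))) ⁻¹' (u f))
          ∩ Asets n).Nonempty} ∈ U := hνA _ hW''open hνW''
    refine Filter.mem_of_superset hT ?_
    intro n hn
    obtain ⟨ν', hν'W'', hν'A⟩ := hn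
    show ((W ∩ Asets (m + n))).Nonempty
    refine ⟨hmul μ' ν', ?_, hmul_mem_Asets hμ'A hν'A⟩
    apply hsub
    rw [Set.mem_pi]
    intro f hf
    have hmem' := Set.mem_iInter₂.mp hν'W'' f hf
    rw [hmul_eval_fin heF (Asets.bnd hν'A) f]
    exact hmem'
  rwa [hU] at hkey
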